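/- If a binary sequence d of length n-1 is obtained from a binary sequence c of length n by deleting one symbol, then 𝟙_{10}(d) (of length n-2) can be obtained from 𝟙_{10}(c) (of length n-1) by deleting one symbol, and likewise 𝟙_{01}(d) is obtained from 𝟙_{01}(c) by one deletion. -/

import Mathlib

def ind10 (c : List Bool) : List Bool := List.zipWith (fun a b => a && !b) c c.tail

def ind01 (c : List Bool) : List Bool := List.zipWith (fun a b => !a && b) c c.tail

lemma zip_aux (f : Bool → Bool → Bool)
    (hf : ∀ a b x : Bool, x ≠ b → f a b = f a x ∨ f a b = f x b)
    {d c : List Bool} (hsub : d.Sublist c) (hlen : d.length + 1 = c.length) :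
    (List.zipWith f d d.tail).Sublist (List.zipWith f c c.tail) := by
  induction hsub with
  | slnil => simp at hlen
  | @cons l₁ l₂ a h ih =>
    have he : l₁ = l₂ := h.eq_of_length (by simpa using hlen)
    subst he
    cases l₁ with
    | nil => simp
    | cons b t => exact (List.Sublist.refl _).cons _
  | @cons_cons l₁ l₂ a h ih =>
    cases l₁ with
    | nil => exact List.nil_sublist _
    | cons b d' =>
      cases l₂ with
      | nil => simp at hlen
      | cons x c' =>
        by_cases hbx : b = x
        · subst hbx
          exact (ih (by simpa using hlen)).cons₂ _
        · have h' : (b :: d').Sublist c' :=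
            (List.cons_sublist_cons'.mp h).resolve_right (fun hh => hbx hh.1)
          have he : b :: d' = c' := h'.eq_of_length (by simpa using hlen)
          subst he
          simp only [List.tail_cons, List.zipWith_cons_cons]
          rcases hf a b x (fun hh => hbx hh.symm) with hfe | hfe
          · rw [hfe]; exact ((List.Sublist.refl _).cons _).cons₂ _
          · rw [hfe]; exact ((List.Sublist.refl _).cons₂ _).cons _

theorem stmt10 (n : ℕ) (c d : List Bool) (hn : 1 ≤ n)
    (hc : c.length = n) (hd : d.length = n - 1) (hsub : d.Sublist c) :
    (ind10 d).Sublist (ind10 c) ∧ (ind01 d).Sublist (ind01 c) := by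
  have hlen : d.length + 1 = c.length := by omega
  exact ⟨zip_aux _ (by decide) hsub hlen, zip_aux _ (by decide) hsub hlen⟩
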